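/- Let γ ∈ 𝕋 and ζ ∈ 𝕋, and let θ be the characteristic function of Û₀. If |Kμ_γ(rζ)| → ∞ as r → 1⁻, then the radial limit of the characteristic function satisfies lim_{r→1⁻} θ(rζ) = γ. -/

import Mathlib

open MeasureTheory Filter ContinuousLinearMap
open scoped ENNReal Topology ComplexConjugate

noncomputable section

/-- The Cauchy transform `K(fτ)(z) = ∫ f(ξ)/(1 - conj(ξ) z) dτ(ξ)` of the measure `fτ`. -/
def cauchyT (τ : Measure ℂ) (f : ℂ → ℂ) (z : ℂ) : ℂ :=
  ∫ ξ, f ξ / (1 - conj ξ * z) ∂τ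

/-- The function `ξ ↦ conj ξ`. -/
def xibarFun : ℂ → ℂ := fun ξ => conj ξ

/-- The constant function `1`. -/
def oneFun : ℂ → ℂ := fun _ => 1

/-- The operator `Û_γ = M_ξ + (γ - 1)⟨·, ξ̄⟩1` on `L²(μ)`, where `Mxi` is multiplication by
the independent variable, `xibar` is the function `ξ ↦ conj ξ` and `one` is the constant
function `1`.  (Here `⟨f, ξ̄⟩ = ∫ f(ξ) ξ dμ(ξ)` is linear in `f`.) -/
def clarkOp (μ : Measure ℂ) (Mxi : Lp ℂ 2 μ →L[ℂ] Lp ℂ 2 μ) (xibar one : Lp ℂ 2 μ)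
    (γ : ℂ) : Lp ℂ 2 μ →L[ℂ] Lp ℂ 2 μ :=
  Mxi + (γ - 1) • ((innerSL ℂ xibar).smulRight one)

/-- The scalar characteristic function
`θ(z) = ⟨(-U + z D₊ (I - z U*)⁻¹ D) ξ̄, 1⟩` of a contraction `U` on `L²(μ)` with defect
operators `Dm = (I - U*U)^{1/2}` and `Ds = (I - U U*)^{1/2}`. -/
def charF {μ : Measure ℂ} (U Dm Ds : Lp ℂ 2 μ →L[ℂ] Lp ℂ 2 μ) (xibar one : Lp ℂ 2 μ)
    (z : ℂ) : ℂ :=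
  inner ℂ one ((-U + z • (Ds ∘L Ring.inverse (1 - z • ContinuousLinearMap.adjoint U) ∘L Dm))
    xibar)

/-- `T^{(k)}`: nonnegative powers of `T`; powers of the adjoint for negative `k`. -/
def zpowOp {E : Type*} [NormedAddCommGroup E] [InnerProductSpace ℂ E] [CompleteSpace E]
    (T : E →L[ℂ] E) (k : ℤ) : E →L[ℂ] E :=
  if 0 ≤ k then T ^ k.toNat else (ContinuousLinearMap.adjoint T) ^ (-k).toNat

/-- Normalized Lebesgue (arclength) measure on the unit circle `𝕋`, as a measure on `ℂ`. -/
def mCircle : Measure ℂ :=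
  (ENNReal.ofReal (2 * Real.pi))⁻¹ •
    (volume.restrict (Set.Ioc (0:ℝ) (2 * Real.pi))).map (circleMap 0 1)

/-- A function on the disc is *inner* if its radial limits exist and have modulus one at
`m`-almost every point of the unit circle. -/
def IsInnerFun (f : ℂ → ℂ) : Prop :=
  ∀ᵐ ξ ∂mCircle, ∃ L : ℂ,
    Tendsto (fun r : ℝ => f ((r : ℂ) * ξ)) (𝓝[<] (1:ℝ)) (𝓝 L) ∧ ‖L‖ = 1

section auxlemmas

variable {E : Type*} [NormedAddCommGroup E] [InnerProductSpace ℂ E] [CompleteSpace E]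

lemma adjoint_rankOne (x y : E) :
    ContinuousLinearMap.adjoint ((innerSL ℂ x).smulRight y) = (innerSL ℂ y).smulRight x := by
  symm
  rw [ContinuousLinearMap.eq_adjoint_iff]
  intro u v
  simp only [ContinuousLinearMap.smulRight_apply, innerSL_apply_apply, inner_smul_left,
    inner_smul_right, inner_conj_symm]
  ring

lemma sqrt_rankOne_proj (S : E →L[ℂ] E) (hS : S.IsPositive) (x : E)
    (hx : (inner ℂ x x : ℂ) = 1)
    (hSS : S ∘L S = (innerSL ℂ x).smulRight x) : S x = x := by
  have hsa : ContinuousLinearMap.adjoint S = S := hS.isSelfAdjoint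
  set c : ℂ := inner ℂ x (S x) with hc
  have h1 : (inner ℂ (S x) x : ℂ) = inner ℂ x (S x) := by
    conv_lhs => rw [← hsa]
    exact ContinuousLinearMap.adjoint_inner_left S x x
  have hcre : (starRingEnd ℂ) c = c := by
    rw [hc, inner_conj_symm]
    exact h1
  set w : E := S x - c • x with hw
  have hxw : (inner ℂ x w : ℂ) = 0 := by
    simp only [hw, inner_sub_right, inner_smul_right, hx, hc, mul_one, sub_self]
  have hSw : S w = 0 := by
    have h2 := ContinuousLinearMap.adjoint_inner_left S (S w) w
    rw [hsa] at h2
    have h3 : (inner ℂ w (S (S w)) : ℂ) = 0 := by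
      have h4 : S (S w) = (inner ℂ x w : ℂ) • x := by
        have := ContinuousLinearMap.ext_iff.mp hSS w
        simpa [ContinuousLinearMap.comp_apply] using this
      rw [h4, hxw]
      simp
    have : (inner ℂ (S w) (S w) : ℂ) = 0 := by rw [← h2] at h3; exact h3
    simpa using inner_self_eq_zero.mp this
  have hSx' : S x = c • x + w := by rw [hw]; abel
  have hSSx : S (S x) = x := by
    have := ContinuousLinearMap.ext_iff.mp hSS x
    simpa only [ContinuousLinearMap.comp_apply, ContinuousLinearMap.smulRight_apply,
      innerSL_apply_apply, hx, one_smul] using this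
  have h3 : S (S x) = c • S x := by
    conv_lhs => rw [show S x = c • x + w from hSx']
    rw [map_add, ContinuousLinearMap.map_smul, hSw, add_zero]
  have hxc : x = c • S x := by rw [← h3, hSSx]
  have hc2 : c * c = 1 := by
    have hxx : x = (c * c) • x + c • w := by
      conv_lhs => rw [hxc]
      rw [hSx', smul_add, smul_smul]
    have h5 := congrArg (fun v => (inner ℂ x v : ℂ)) hxx
    simp only [inner_add_right, inner_smul_right, hx, hxw, mul_zero, add_zero, mul_one] at h5
    exact h5.symm
  have hcim : c.im = 0 := by
    have := congrArg Complex.im hcre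
    simp only [Complex.conj_im] at this
    linarith
  have hcrepos : 0 ≤ c.re := by
    have h := hS.inner_nonneg_right x
    simpa [hc] using (Complex.le_def.mp h).1
  have hc1 : c = 1 := by
    have hre := congrArg Complex.re hc2
    simp only [Complex.mul_re, hcim, mul_zero, sub_zero, Complex.one_re] at hre
    have : c.re = 1 := by nlinarith
    exact Complex.ext (by simp [this]) (by simp [hcim])
  rw [hc1, one_smul] at hxc
  exact hxc.symm

lemma hasSum_inner_inverse_one_sub (T : E →L[ℂ] E) (hT : ‖T‖ ≤ 1) {z : ℂ} (hz : ‖z‖ < 1)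
    (u v : E) :
    HasSum (fun n : ℕ => z ^ n * (inner ℂ u ((T ^ n) v) : ℂ))
      (inner ℂ u ((Ring.inverse (1 - z • T)) v)) := by
  have hzT : ‖z • T‖ < 1 := by
    calc ‖z • T‖ = ‖z‖ * ‖T‖ := norm_smul z T
    _ ≤ ‖z‖ := mul_le_of_le_one_right (norm_nonneg z) hT
    _ < 1 := hz
  have hgeom := hasSum_geom_series_inverse (z • T) hzT
  have h2 := hgeom.mapL ((innerSL ℂ u).comp (ContinuousLinearMap.apply ℂ E v))
  convert h2 using 2 with n
  · rfl
  · show _ = inner ℂ u (((z • T) ^ n) v)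
    rw [smul_pow, ContinuousLinearMap.smul_apply, inner_smul_right]
  · rfl

lemma norm_smul_op_lt_one (T : E →L[ℂ] E) (hT : ‖T‖ ≤ 1) {z : ℂ} (hz : ‖z‖ < 1) :
    ‖z • T‖ < 1 := by
  calc ‖z • T‖ = ‖z‖ * ‖T‖ := norm_smul z T
  _ ≤ ‖z‖ := mul_le_of_le_one_right (norm_nonneg z) hT
  _ < 1 := hz

end auxlemmas


set_option maxHeartbeats 2000000 in
theorem statement9
    (μ : Measure ℂ) [IsProbabilityMeasure μ] (hμ : μ (Metric.sphere (0:ℂ) 1)ᶜ = 0)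
    (Mxi : Lp ℂ 2 μ →L[ℂ] Lp ℂ 2 μ)
    (hMxi : ∀ f : Lp ℂ 2 μ, ∀ᵐ ξ ∂μ, (Mxi f) ξ = ξ * f ξ)
    (one xibar : Lp ℂ 2 μ)
    (hone : ∀ᵐ ξ ∂μ, one ξ = 1) (hxibar : ∀ᵐ ξ ∂μ, xibar ξ = conj ξ)
    -- `D0` and `Ds0` are the positive square roots of `I - Û₀* Û₀` and `I - Û₀ Û₀*`
    (D0 Ds0 : Lp ℂ 2 μ →L[ℂ] Lp ℂ 2 μ)
    (hD0pos : D0.IsPositive)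
    (hD0 : D0 ∘L D0 = 1 - ContinuousLinearMap.adjoint (clarkOp μ Mxi xibar one 0) ∘L
      clarkOp μ Mxi xibar one 0)
    (hDs0pos : Ds0.IsPositive)
    (hDs0 : Ds0 ∘L Ds0 = 1 - clarkOp μ Mxi xibar one 0 ∘L
      ContinuousLinearMap.adjoint (clarkOp μ Mxi xibar one 0))
    (γ : ℂ) (hγ : ‖γ‖ = 1) (ζ : ℂ) (hζ : ‖ζ‖ = 1)
    -- `μγ` is the spectral measure of `Û_γ` with respect to the cyclic vector `1`
    (μγ : Measure ℂ) [IsProbabilityMeasure μγ] (hμγsupp : μγ (Metric.sphere (0:ℂ) 1)ᶜ = 0)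
    (hμγmom : ∀ k : ℤ,
      (inner ℂ one (zpowOp (clarkOp μ Mxi xibar one γ) k one) : ℂ) = ∫ ξ, ξ ^ k ∂μγ)
    (hblow : Tendsto (fun r : ℝ => ‖cauchyT μγ oneFun ((r : ℂ) * ζ)‖)
      (𝓝[<] (1:ℝ)) atTop) :
    Tendsto (fun r : ℝ => charF (clarkOp μ Mxi xibar one 0) D0 Ds0 xibar one ((r : ℂ) * ζ))
      (𝓝[<] (1:ℝ)) (𝓝 γ) := by
  -- a.e. facts on the circle
  have hcirc : ∀ᵐ ξ ∂μ, ‖ξ‖ = 1 := by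
    have h : ∀ᵐ ξ ∂μ, ξ ∈ Metric.sphere (0:ℂ) 1 := by
      rw [MeasureTheory.ae_iff]; exact hμ
    filter_upwards [h] with ξ hξ
    simpa [Complex.dist_eq] using hξ
  have hcircγ : ∀ᵐ ξ ∂μγ, ‖ξ‖ = 1 := by
    have h : ∀ᵐ ξ ∂μγ, ξ ∈ Metric.sphere (0:ℂ) 1 := by
      rw [MeasureTheory.ae_iff]; exact hμγsupp
    filter_upwards [h] with ξ hξ
    simpa [Complex.dist_eq] using hξ
  have hmc : ∀ ξ : ℂ, ‖ξ‖ = 1 → ξ * conj ξ = 1 := by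
    intro ξ h
    rw [Complex.mul_conj, Complex.normSq_eq_norm_sq, h]
    norm_num
  have hcm : ∀ ξ : ℂ, ‖ξ‖ = 1 → conj ξ * ξ = 1 := by
    intro ξ h
    rw [mul_comm]; exact hmc ξ h
  -- inner products as integrals
  have hip : ∀ f g : Lp ℂ 2 μ, (inner ℂ f g : ℂ) = ∫ ξ, conj (f ξ) * g ξ ∂μ := by
    intro f g
    rw [MeasureTheory.L2.inner_def]
    simp [RCLike.inner_apply, mul_comm]
  have honeone : (inner ℂ one one : ℂ) = 1 := by
    rw [hip]
    rw [integral_congr_ae (g := fun _ => (1:ℂ)) (by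
      filter_upwards [hone] with ξ h; simp [h])]
    simp
  have hxx : (inner ℂ xibar xibar : ℂ) = 1 := by
    rw [hip]
    rw [integral_congr_ae (g := fun _ => (1:ℂ)) (by
      filter_upwards [hxibar, hcirc] with ξ h h1
      rw [h, Complex.conj_conj]
      exact hmc ξ h1)]
    simp
  -- the adjoint of Mxi acts as multiplication by conj ξ
  have hadj : ∀ g : Lp ℂ 2 μ,
      (ContinuousLinearMap.adjoint Mxi g : Lp ℂ 2 μ) =ᵐ[μ] fun ξ => conj ξ * g ξ := by
    intro g
    have hmem : MemLp (fun ξ : ℂ => conj ξ * g ξ) 2 μ := by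
      refine MemLp.of_le (Lp.memLp g) ?_ ?_
      · exact (Complex.continuous_conj.aestronglyMeasurable.mul (Lp.aestronglyMeasurable g))
      · filter_upwards [hcirc] with ξ h1
        simp only [norm_mul]
        rw [show ‖conj ξ‖ = ‖ξ‖ by simp, h1, one_mul]
    set g1 : Lp ℂ 2 μ := hmem.toLp _ with hg1def
    have hg1 : (g1 : Lp ℂ 2 μ) =ᵐ[μ] fun ξ => conj ξ * g ξ := hmem.coeFn_toLp
    have hf0 : (↑(g1 - ContinuousLinearMap.adjoint Mxi g) : ℂ → ℂ) =ᵐ[μ]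
        fun ξ => conj ξ * g ξ - (ContinuousLinearMap.adjoint Mxi g) ξ := by
      filter_upwards [Lp.coeFn_sub g1 (ContinuousLinearMap.adjoint Mxi g), hg1] with ξ h1 h2
      rw [h1, Pi.sub_apply, h2]
    have key : (inner ℂ (g1 - ContinuousLinearMap.adjoint Mxi g)
        (g1 - ContinuousLinearMap.adjoint Mxi g) : ℂ) = 0 := by
      have h1 : (inner ℂ (g1 - ContinuousLinearMap.adjoint Mxi g) g1 : ℂ)
          = inner ℂ (Mxi (g1 - ContinuousLinearMap.adjoint Mxi g)) g := by
        rw [hip, hip]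
        apply integral_congr_ae
        filter_upwards [hg1, hMxi (g1 - ContinuousLinearMap.adjoint Mxi g)] with ξ e1 e2
        rw [e1, e2]
        simp only [map_mul]
        ring
      have h2 : (inner ℂ (g1 - ContinuousLinearMap.adjoint Mxi g)
          (ContinuousLinearMap.adjoint Mxi g) : ℂ)
          = inner ℂ (Mxi (g1 - ContinuousLinearMap.adjoint Mxi g)) g :=
        ContinuousLinearMap.adjoint_inner_right Mxi (g1 - ContinuousLinearMap.adjoint Mxi g) g
      rw [inner_sub_right, h1, h2, sub_self]
    have hf00 : g1 - ContinuousLinearMap.adjoint Mxi g = 0 := inner_self_eq_zero.mp key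
    have heq : g1 = ContinuousLinearMap.adjoint Mxi g := sub_eq_zero.mp hf00
    rw [← heq]
    exact hg1
  -- Lp-level identities
  have hMxibar : Mxi xibar = one := by
    apply MeasureTheory.Lp.ext (p := (2:ℝ≥0∞))
    filter_upwards [hMxi xibar, hxibar, hone, hcirc] with ξ e1 e2 e3 e4
    rw [e1, e2, e3]
    exact hmc ξ e4
  have hMaone : ContinuousLinearMap.adjoint Mxi one = xibar := by
    apply MeasureTheory.Lp.ext (p := (2:ℝ≥0∞))
    filter_upwards [hadj one, hone, hxibar] with ξ e1 e2 e3
    rw [e1, e2, e3, mul_one]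
  have hMaM : ∀ f : Lp ℂ 2 μ, ContinuousLinearMap.adjoint Mxi (Mxi f) = f := by
    intro f
    apply MeasureTheory.Lp.ext (p := (2:ℝ≥0∞))
    filter_upwards [hadj (Mxi f), hMxi f, hcirc] with ξ e1 e2 e3
    rw [e1, e2, ← mul_assoc, hcm ξ e3, one_mul]
  have hMMa : ∀ f : Lp ℂ 2 μ, Mxi (ContinuousLinearMap.adjoint Mxi f) = f := by
    intro f
    apply MeasureTheory.Lp.ext (p := (2:ℝ≥0∞))
    filter_upwards [hMxi (ContinuousLinearMap.adjoint Mxi f), hadj f, hcirc] with ξ e1 e2 e3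
    rw [e1, e2, ← mul_assoc, hmc ξ e3, one_mul]
  -- pointwise formula for clarkOp and its adjoint
  have hUapp : ∀ (g' : ℂ) (f : Lp ℂ 2 μ), clarkOp μ Mxi xibar one g' f =
      Mxi f + (g' - 1) • ((inner ℂ xibar f : ℂ) • one) := by
    intro g' f
    simp [clarkOp, ContinuousLinearMap.add_apply, ContinuousLinearMap.smul_apply,
      ContinuousLinearMap.smulRight_apply]
  have haUop : ∀ g' : ℂ, ContinuousLinearMap.adjoint (clarkOp μ Mxi xibar one g') =
      ContinuousLinearMap.adjoint Mxi +
        (starRingEnd ℂ) (g' - 1) • ((innerSL ℂ one).smulRight xibar) := by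
    intro g'
    simp only [clarkOp]
    rw [map_add, map_smulₛₗ, adjoint_rankOne]
  have haUapp : ∀ (g' : ℂ) (f : Lp ℂ 2 μ),
      ContinuousLinearMap.adjoint (clarkOp μ Mxi xibar one g') f =
      ContinuousLinearMap.adjoint Mxi f +
        (starRingEnd ℂ) (g' - 1) • ((inner ℂ one f : ℂ) • xibar) := by
    intro g' f
    rw [haUop g']
    simp [ContinuousLinearMap.add_apply, ContinuousLinearMap.smul_apply,
      ContinuousLinearMap.smulRight_apply]
  -- useful inner product identities
  have hinner_one_Mxi : ∀ f : Lp ℂ 2 μ, (inner ℂ one (Mxi f) : ℂ) = inner ℂ xibar f := by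
    intro f
    have h := ContinuousLinearMap.adjoint_inner_left Mxi f one
    rw [hMaone] at h
    exact h.symm
  have hinner_xibar_Ma : ∀ f : Lp ℂ 2 μ,
      (inner ℂ xibar (ContinuousLinearMap.adjoint Mxi f) : ℂ) = inner ℂ one f := by
    intro f
    have h := ContinuousLinearMap.adjoint_inner_right Mxi xibar f
    rw [hMxibar] at h
    exact h
  -- pointwise composition formulas
  have hU0app : ∀ f : Lp ℂ 2 μ, clarkOp μ Mxi xibar one 0 f =
      Mxi f - (inner ℂ xibar f : ℂ) • one := by
    intro f
    rw [hUapp 0 f, zero_sub, neg_one_smul, sub_eq_add_neg]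
  have haU0app : ∀ f : Lp ℂ 2 μ,
      ContinuousLinearMap.adjoint (clarkOp μ Mxi xibar one 0) f =
      ContinuousLinearMap.adjoint Mxi f - (inner ℂ one f : ℂ) • xibar := by
    intro f
    rw [haUapp 0 f, zero_sub, map_neg, map_one, neg_one_smul, sub_eq_add_neg]
  have hU0xibar : clarkOp μ Mxi xibar one 0 xibar = 0 := by
    rw [hU0app xibar, hMxibar, hxx, one_smul, sub_self]
  have haU0one : ContinuousLinearMap.adjoint (clarkOp μ Mxi xibar one 0) one = 0 := by
    rw [haU0app one, hMaone, honeone, one_smul, sub_self]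
  -- γ is unimodular
  have hγc : γ * conj γ = 1 := hmc γ hγ
  have hγc' : conj γ * γ = 1 := hcm γ hγ
  -- composition identities
  have haU0U0 : ∀ f : Lp ℂ 2 μ,
      ContinuousLinearMap.adjoint (clarkOp μ Mxi xibar one 0) (clarkOp μ Mxi xibar one 0 f) =
        f - (inner ℂ xibar f : ℂ) • xibar := by
    intro f
    have h2 : ContinuousLinearMap.adjoint Mxi (clarkOp μ Mxi xibar one 0 f)
        = f - (inner ℂ xibar f : ℂ) • xibar := by
      rw [hU0app f, map_sub, ContinuousLinearMap.map_smul, hMaM f, hMaone]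
    have h3 : (inner ℂ one (clarkOp μ Mxi xibar one 0 f) : ℂ) = 0 := by
      rw [hU0app f, inner_sub_right, inner_smul_right, hinner_one_Mxi f, honeone, mul_one,
        sub_self]
    rw [haU0app _, h2, h3, zero_smul, sub_zero]
  have hU0aU0 : ∀ f : Lp ℂ 2 μ,
      clarkOp μ Mxi xibar one 0 (ContinuousLinearMap.adjoint (clarkOp μ Mxi xibar one 0) f) =
        f - (inner ℂ one f : ℂ) • one := by
    intro f
    have h2 : Mxi (ContinuousLinearMap.adjoint (clarkOp μ Mxi xibar one 0) f)
        = f - (inner ℂ one f : ℂ) • one := by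
      rw [haU0app f, map_sub, ContinuousLinearMap.map_smul, hMMa f, hMxibar]
    have h3 : (inner ℂ xibar (ContinuousLinearMap.adjoint (clarkOp μ Mxi xibar one 0) f) : ℂ)
        = 0 := by
      rw [haU0app f, inner_sub_right, inner_smul_right, hinner_xibar_Ma f, hxx, mul_one,
        sub_self]
    rw [hU0app _, h2, h3, zero_smul, sub_zero]
  have haUgUg : ∀ f : Lp ℂ 2 μ,
      ContinuousLinearMap.adjoint (clarkOp μ Mxi xibar one γ)
        (clarkOp μ Mxi xibar one γ f) = f := by
    intro f
    have h2 : ContinuousLinearMap.adjoint Mxi (clarkOp μ Mxi xibar one γ f)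
        = f + ((γ - 1) * (inner ℂ xibar f : ℂ)) • xibar := by
      rw [hUapp γ f, map_add, ContinuousLinearMap.map_smul, hMaM f,
        ContinuousLinearMap.map_smul, hMaone, smul_smul]
    have h3 : (inner ℂ one (clarkOp μ Mxi xibar one γ f) : ℂ) = γ * (inner ℂ xibar f : ℂ) := by
      rw [hUapp γ f, inner_add_right, inner_smul_right, inner_smul_right, hinner_one_Mxi f,
        honeone, mul_one]
      ring
    rw [haUapp γ _, h2, h3, smul_smul]
    have hcoef : (γ - 1) * (inner ℂ xibar f : ℂ)
        + (starRingEnd ℂ) (γ - 1) * (γ * (inner ℂ xibar f : ℂ)) = 0 := by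
      rw [map_sub, map_one]
      linear_combination (inner ℂ xibar f : ℂ) * hγc'
    rw [add_assoc, ← add_smul, hcoef, zero_smul, add_zero]
  -- norm bounds
  have hnormUg : ‖clarkOp μ Mxi xibar one γ‖ ≤ 1 := by
    refine ContinuousLinearMap.opNorm_le_bound _ zero_le_one (fun f => ?_)
    rw [one_mul]
    have h1 : (inner ℂ (clarkOp μ Mxi xibar one γ f) (clarkOp μ Mxi xibar one γ f) : ℂ)
        = inner ℂ f f := by
      rw [← ContinuousLinearMap.adjoint_inner_right (clarkOp μ Mxi xibar one γ) f
        (clarkOp μ Mxi xibar one γ f), haUgUg f]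
    rw [inner_self_eq_norm_sq_to_K, inner_self_eq_norm_sq_to_K] at h1
    have h2 : ‖clarkOp μ Mxi xibar one γ f‖^2 = ‖f‖^2 := by exact_mod_cast h1
    nlinarith [norm_nonneg (clarkOp μ Mxi xibar one γ f), norm_nonneg f]
  have hnormU0 : ‖clarkOp μ Mxi xibar one 0‖ ≤ 1 := by
    refine ContinuousLinearMap.opNorm_le_bound _ zero_le_one (fun f => ?_)
    rw [one_mul]
    have h1 : (inner ℂ (clarkOp μ Mxi xibar one 0 f) (clarkOp μ Mxi xibar one 0 f) : ℂ)
        = inner ℂ f f - (RCLike.ofReal (K := ℂ) (Complex.normSq (inner ℂ xibar f : ℂ))) := by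
      rw [← ContinuousLinearMap.adjoint_inner_right (clarkOp μ Mxi xibar one 0) f
        (clarkOp μ Mxi xibar one 0 f), haU0U0 f, inner_sub_right, inner_smul_right]
      congr 1
      rw [← inner_conj_symm f xibar, Complex.mul_conj]
      rfl
    rw [inner_self_eq_norm_sq_to_K, inner_self_eq_norm_sq_to_K, eq_sub_iff_add_eq] at h1
    have h2 : ‖clarkOp μ Mxi xibar one 0 f‖^2 + Complex.normSq (inner ℂ xibar f : ℂ)
        = ‖f‖^2 := by exact_mod_cast h1
    nlinarith [norm_nonneg (clarkOp μ Mxi xibar one 0 f), norm_nonneg f,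
      Complex.normSq_nonneg (inner ℂ xibar f : ℂ)]
  have hnormaUg : ‖ContinuousLinearMap.adjoint (clarkOp μ Mxi xibar one γ)‖ ≤ 1 := by
    rw [ContinuousLinearMap.adjoint.norm_map]
    exact hnormUg
  have hnormaU0 : ‖ContinuousLinearMap.adjoint (clarkOp μ Mxi xibar one 0)‖ ≤ 1 := by
    rw [ContinuousLinearMap.adjoint.norm_map]
    exact hnormU0
  -- defect operators
  have hD0sq : D0 ∘L D0 = (innerSL ℂ xibar).smulRight xibar := by
    rw [hD0]
    ext f
    rw [ContinuousLinearMap.sub_apply, ContinuousLinearMap.comp_apply, haU0U0 f,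
      ContinuousLinearMap.one_apply, ContinuousLinearMap.smulRight_apply, innerSL_apply_apply,
      sub_sub_cancel]
  have hDs0sq : Ds0 ∘L Ds0 = (innerSL ℂ one).smulRight one := by
    rw [hDs0]
    ext f
    rw [ContinuousLinearMap.sub_apply, ContinuousLinearMap.comp_apply, hU0aU0 f,
      ContinuousLinearMap.one_apply, ContinuousLinearMap.smulRight_apply, innerSL_apply_apply,
      sub_sub_cancel]
  have hD0x : D0 xibar = xibar := sqrt_rankOne_proj D0 hD0pos xibar hxx hD0sq
  have hDs0one : Ds0 one = one := sqrt_rankOne_proj Ds0 hDs0pos one honeone hDs0sq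
  -- the characteristic function
  have hθ : ∀ z : ℂ, charF (clarkOp μ Mxi xibar one 0) D0 Ds0 xibar one z
      = z * (inner ℂ one ((Ring.inverse ((1 : Lp ℂ 2 μ →L[ℂ] Lp ℂ 2 μ)
          - z • ContinuousLinearMap.adjoint (clarkOp μ Mxi xibar one 0))) xibar) : ℂ) := by
    intro z
    rw [charF, ContinuousLinearMap.add_apply, ContinuousLinearMap.neg_apply, hU0xibar,
      neg_zero, zero_add, ContinuousLinearMap.smul_apply, ContinuousLinearMap.comp_apply,
      ContinuousLinearMap.comp_apply, hD0x, inner_smul_right]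
    congr 1
    have hsa : ContinuousLinearMap.adjoint Ds0 = Ds0 := hDs0pos.isSelfAdjoint
    have h := ContinuousLinearMap.adjoint_inner_left Ds0
      (Ring.inverse ((1 : Lp ℂ 2 μ →L[ℂ] Lp ℂ 2 μ)
        - z • ContinuousLinearMap.adjoint (clarkOp μ Mxi xibar one 0)) xibar) one
    rw [hsa, hDs0one] at h
    exact h.symm
  -- zpowOp for negative integers
  have hzpow : ∀ n : ℕ, zpowOp (clarkOp μ Mxi xibar one γ) (-(n:ℤ))
      = (ContinuousLinearMap.adjoint (clarkOp μ Mxi xibar one γ))^n := by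
    intro n
    rcases Nat.eq_zero_or_pos n with h|h
    · subst h; simp [zpowOp]
    · rw [zpowOp, if_neg (by omega), neg_neg]
      simp
  -- moments
  have hmom : ∀ n : ℕ, ∫ ξ, (conj ξ)^n ∂μγ
      = (inner ℂ one (((ContinuousLinearMap.adjoint (clarkOp μ Mxi xibar one γ))^n) one) : ℂ) := by
    intro n
    have h1 := hμγmom (-(n:ℤ))
    rw [hzpow n] at h1
    have h2 : ∫ ξ, (conj ξ)^n ∂μγ = ∫ ξ, ξ^(-(n:ℤ)) ∂μγ := by
      apply integral_congr_ae
      filter_upwards [hcircγ] with ξ h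
      have hinv : conj ξ = ξ⁻¹ := by
        rw [Complex.inv_def, Complex.normSq_eq_norm_sq, h]
        simp
      rw [hinv, zpow_neg, zpow_natCast, inv_pow]
    rw [h2, ← h1]
  -- the Cauchy transform of μγ
  have hG : ∀ z : ℂ, ‖z‖ < 1 → cauchyT μγ oneFun z
      = (inner ℂ one ((Ring.inverse ((1 : Lp ℂ 2 μ →L[ℂ] Lp ℂ 2 μ)
          - z • ContinuousLinearMap.adjoint (clarkOp μ Mxi xibar one γ))) one) : ℂ) := by
    intro z hz
    have hsum := hasSum_inner_inverse_one_sub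
      (ContinuousLinearMap.adjoint (clarkOp μ Mxi xibar one γ)) hnormaUg hz one one
    rw [← hsum.tsum_eq, cauchyT]
    have hstep1 : ∫ ξ, oneFun ξ / (1 - conj ξ * z) ∂μγ
        = ∫ ξ, ∑' n : ℕ, (conj ξ * z)^n ∂μγ := by
      apply integral_congr_ae
      filter_upwards [hcircγ] with ξ h
      have hnz : ‖conj ξ * z‖ < 1 := by
        rw [norm_mul, show ‖conj ξ‖ = ‖ξ‖ by simp, h, one_mul]
        exact hz
      rw [tsum_geometric_of_norm_lt_one hnz, oneFun, one_div]
    rw [hstep1]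
    have hstep2 : ∫ ξ, ∑' n : ℕ, (conj ξ * z)^n ∂μγ
        = ∑' n : ℕ, ∫ ξ, (conj ξ * z)^n ∂μγ := by
      apply integral_tsum
      · intro n
        exact ((Complex.continuous_conj.mul continuous_const).pow n).aestronglyMeasurable
      · have hcount : ∀ n : ℕ, ∫⁻ ξ, ‖(conj ξ * z)^n‖₊ ∂μγ ≤ (‖z‖₊ : ℝ≥0∞)^n := by
          intro n
          have heq : ∫⁻ ξ, ‖(conj ξ * z)^n‖₊ ∂μγ = ∫⁻ _, ((‖z‖₊ : ℝ≥0∞)^n) ∂μγ := by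
            apply lintegral_congr_ae
            filter_upwards [hcircγ] with ξ h
            rw [nnnorm_pow, nnnorm_mul]
            have : ‖conj ξ‖₊ = 1 := by
              ext
              rw [coe_nnnorm, show ‖conj ξ‖ = ‖ξ‖ by simp, h]
              rfl
            rw [this, one_mul, ENNReal.coe_pow]
          rw [heq, lintegral_const, measure_univ, mul_one]
        have hne : (1 : ℝ≥0∞) - ‖z‖₊ ≠ 0 := by
          have hlt : (‖z‖₊ : ℝ≥0∞) < 1 := by
            rw [← ENNReal.coe_one, ENNReal.coe_lt_coe]
            exact_mod_cast hz
          simp only [ne_eq, tsub_eq_zero_iff_le, not_le]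
          exact hlt
        have hsumle : ∑' n : ℕ, ∫⁻ ξ, ‖(conj ξ * z)^n‖₊ ∂μγ
            ≤ ((1 : ℝ≥0∞) - ‖z‖₊)⁻¹ :=
          le_trans (ENNReal.tsum_le_tsum hcount) (le_of_eq (ENNReal.tsum_geometric _))
        exact ne_top_of_le_ne_top (by rw [ne_eq, ENNReal.inv_eq_top]; exact hne) hsumle
    rw [hstep2]
    apply tsum_congr
    intro n
    have hpt : (fun ξ : ℂ => (conj ξ * z)^n) = fun ξ : ℂ => z^n * (conj ξ)^n := by
      funext ξ
      rw [mul_pow]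
      ring
    rw [hpt, integral_const_mul, hmom n]
  -- the key algebraic identity
  have hkey : ∀ z : ℂ, ‖z‖ < 1 →
      cauchyT μγ oneFun z *
        (1 - conj γ * charF (clarkOp μ Mxi xibar one 0) D0 Ds0 xibar one z) = 1 := by
    intro z hz
    set A := (1 : Lp ℂ 2 μ →L[ℂ] Lp ℂ 2 μ)
      - z • ContinuousLinearMap.adjoint (clarkOp μ Mxi xibar one 0) with hA
    set B := (1 : Lp ℂ 2 μ →L[ℂ] Lp ℂ 2 μ)
      - z • ContinuousLinearMap.adjoint (clarkOp μ Mxi xibar one γ) with hB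
    have hAunit : IsUnit A := isUnit_one_sub_of_norm_lt_one (norm_smul_op_lt_one _ hnormaU0 hz)
    have hBunit : IsUnit B := isUnit_one_sub_of_norm_lt_one (norm_smul_op_lt_one _ hnormaUg hz)
    set u : Lp ℂ 2 μ := Ring.inverse B one with hu
    have hBu : B u = one := by
      have h := Ring.mul_inverse_cancel B hBunit
      calc B u = (B * Ring.inverse B) one := by rw [ContinuousLinearMap.mul_apply, hu]
      _ = one := by rw [h, ContinuousLinearMap.one_apply]
    have hABdiff : ∀ f : Lp ℂ 2 μ, A f
        = B f + (z * conj γ * (inner ℂ one f : ℂ)) • xibar := by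
      intro f
      rw [hA, hB]
      simp only [ContinuousLinearMap.sub_apply, ContinuousLinearMap.one_apply,
        ContinuousLinearMap.smul_apply]
      rw [haUapp 0 f, haUapp γ f]
      simp only [zero_sub, map_neg, map_one, map_sub]
      module
    have hAu : A u = one + (z * conj γ * (inner ℂ one u : ℂ)) • xibar := by
      rw [hABdiff u, hBu]
    have hAone : A one = one := by
      rw [hA]
      simp only [ContinuousLinearMap.sub_apply, ContinuousLinearMap.one_apply,
        ContinuousLinearMap.smul_apply, haU0one, smul_zero, sub_zero]
    have hAinv : ∀ f : Lp ℂ 2 μ, Ring.inverse A (A f) = f := by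
      intro f
      rw [← ContinuousLinearMap.mul_apply, Ring.inverse_mul_cancel A hAunit,
        ContinuousLinearMap.one_apply]
    have hAinvone : Ring.inverse A one = one := by
      conv_lhs => rw [← hAone]
      exact hAinv one
    have huu : u = one + (z * conj γ * (inner ℂ one u : ℂ)) • Ring.inverse A xibar := by
      conv_lhs => rw [← hAinv u, hAu]
      rw [map_add, ContinuousLinearMap.map_smul, hAinvone]
    have hGinner : (inner ℂ one u : ℂ) = 1
        + (z * conj γ * (inner ℂ one u : ℂ)) * (inner ℂ one (Ring.inverse A xibar) : ℂ) := by
      conv_lhs => rw [huu]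
      rw [inner_add_right, inner_smul_right, honeone]
    rw [hG z hz, hθ z, ← hB, ← hA, ← hu]
    linear_combination hGinner
  -- conclusion
  have hIoo : Set.Ioo (0:ℝ) 1 ∈ 𝓝[<] (1:ℝ) :=
    Ioo_mem_nhdsLT_of_mem (by norm_num : (1:ℝ) ∈ Set.Ioc (0:ℝ) 1)
  have hmain : ∀ᶠ r : ℝ in 𝓝[<] (1:ℝ),
      dist (charF (clarkOp μ Mxi xibar one 0) D0 Ds0 xibar one ((r:ℂ)*ζ)) γ
        = (‖cauchyT μγ oneFun ((r:ℂ)*ζ)‖)⁻¹ := by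
    filter_upwards [hIoo] with r hr
    have hz : ‖((r:ℂ)*ζ)‖ < 1 := by
      rw [norm_mul, Complex.norm_real, Real.norm_eq_abs, abs_of_pos hr.1,
        hζ, mul_one]
      exact hr.2
    have hk := hkey _ hz
    have habs : ‖cauchyT μγ oneFun ((r:ℂ)*ζ)‖ *
        ‖1 - conj γ * charF (clarkOp μ Mxi xibar one 0) D0 Ds0 xibar one ((r:ℂ)*ζ)‖
        = 1 := by
      rw [← norm_mul, hk, norm_one]
    have hginv : ‖1 - conj γ *
        charF (clarkOp μ Mxi xibar one 0) D0 Ds0 xibar one ((r:ℂ)*ζ)‖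
        = (‖cauchyT μγ oneFun ((r:ℂ)*ζ)‖)⁻¹ :=
      eq_inv_of_mul_eq_one_left (by rw [mul_comm] at habs; exact habs)
    rw [Complex.dist_eq]
    have hdiff : charF (clarkOp μ Mxi xibar one 0) D0 Ds0 xibar one ((r:ℂ)*ζ) - γ
        = -(γ * (1 - conj γ * charF (clarkOp μ Mxi xibar one 0) D0 Ds0 xibar one ((r:ℂ)*ζ))) := by
      linear_combination (-(charF (clarkOp μ Mxi xibar one 0) D0 Ds0 xibar one ((r:ℂ)*ζ))) * hγc
    rw [hdiff, norm_neg, norm_mul, hγ, one_mul]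
    exact hginv
  have hinv0 : Tendsto (fun r : ℝ => (‖cauchyT μγ oneFun ((r:ℂ)*ζ)‖)⁻¹)
      (𝓝[<] (1:ℝ)) (𝓝 0) := hblow.inv_tendsto_atTop
  rw [tendsto_iff_dist_tendsto_zero]
  exact Tendsto.congr' (EventuallyEq.symm hmain) hinv0

end
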